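/- arXiv:1111.2477 — 5 statements merged into one kernel-verified Lean document; each statement's English description precedes it below -/
import Mathlib

section
/- Every (1,≤2)-identifying code of the king grid has density at least 1/3. -/
open Filter

/-- Closed neighbourhood of a vertex in the king grid: `v` together with all vertices
differing from `v` by at most `1` in each coordinate. -/
def kingN (v : ℤ × ℤ) : Set (ℤ × ℤ) := {u | |u.1 - v.1| ≤ 1 ∧ |u.2 - v.2| ≤ 1}

/-- Closed neighbourhood of a set of vertices. -/
def kingNS (X : Set (ℤ × ℤ)) : Set (ℤ × ℤ) := ⋃ v ∈ X, kingN v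

/-- `C ⊆ ℤ²` is a `(1, ≤ ℓ)`-identifying code in the king grid. -/
def IsIdCode (ℓ : ℕ) (C : Set (ℤ × ℤ)) : Prop :=
  ∀ X Y : Set (ℤ × ℤ), X.Finite → Y.Finite → X.ncard ≤ ℓ → Y.ncard ≤ ℓ → X ≠ Y →
    kingNS X ∩ C ≠ kingNS Y ∩ C

/-- The square `Q_n = {(x,y) : |x| ≤ n, |y| ≤ n}`. -/
noncomputable def Qn (n : ℕ) : Finset (ℤ × ℤ) := Finset.Icc (-(n : ℤ), -(n : ℤ)) ((n : ℤ), (n : ℤ))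

/-- The density of a code `C ⊆ ℤ²`. -/
noncomputable def density (C : Set (ℤ × ℤ)) : ℝ :=
  Filter.atTop.limsup fun n : ℕ =>
    ((C ∩ (Qn n : Set (ℤ × ℤ))).ncard : ℝ) / ((Qn n).card : ℝ)

/-- `n(X, C)`: the average number of codewords of `C` in the translates of `X`. -/
noncomputable def avgCount (X C : Set (ℤ × ℤ)) : ℝ :=
  Filter.atTop.limsup fun n : ℕ =>
    (∑ v ∈ Qn n, ((C ∩ ((fun u => v + u) '' X)).ncard : ℝ)) / ((Qn n).card : ℝ)

/-- The frame at `v`: the 12-element set `{v+(a,b) : a,b ∈ {0,1,2,3}, a ∈ {0,3} or b ∈ {0,3}}`. -/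
noncomputable def frame (v : ℤ × ℤ) : Finset (ℤ × ℤ) :=
  (((Finset.Icc (0 : ℤ) 3) ×ˢ (Finset.Icc (0 : ℤ) 3)).filter
      fun p => p.1 = 0 ∨ p.1 = 3 ∨ p.2 = 0 ∨ p.2 = 3).image fun p => v + p

/-- The number of codewords of `C` in the frame at `v`. -/
noncomputable def frameCount (C : Set (ℤ × ℤ)) (v : ℤ × ℤ) : ℕ :=
  (C ∩ (frame v : Set (ℤ × ℤ))).ncard

/-- The four corners of the frame at `v`. -/
def corners (v : ℤ × ℤ) : Finset (ℤ × ℤ) :=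
  {v + (0, 0), v + (3, 0), v + (0, 3), v + (3, 3)}

/-- The four sides of the frame at `v`. -/
def sides (v : ℤ × ℤ) : Finset (Finset (ℤ × ℤ)) :=
  { {v + (0, 0), v + (1, 0), v + (2, 0), v + (3, 0)},
    {v + (0, 3), v + (1, 3), v + (2, 3), v + (3, 3)},
    {v + (0, 0), v + (0, 1), v + (0, 2), v + (0, 3)},
    {v + (3, 0), v + (3, 1), v + (3, 2), v + (3, 3)} }

/-- Offsets at (frame-lattice) distance at most 2, i.e. the 2-ball of the origin. -/
noncomputable def ball2 : Finset (ℤ × ℤ) := Finset.Icc (-2, -2) (2, 2)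

/-- Offsets at (frame-lattice) distance exactly 1. -/
noncomputable def sphere1 : Finset (ℤ × ℤ) := (Finset.Icc (-1, -1) (1, 1)).erase (0, 0)

/-- Offsets at (frame-lattice) distance exactly 2. -/
noncomputable def sphere2 : Finset (ℤ × ℤ) := Finset.Icc (-2, -2) (2, 2) \ Finset.Icc (-1, -1) (1, 1)

/-- The number of offsets `d ∈ S` satisfying the property `P`. -/
noncomputable def countFrames (S : Finset (ℤ × ℤ)) (P : ℤ × ℤ → Prop) : ℕ :=
  {d | d ∈ S ∧ P d}.ncard

/-- The four offsets `(2,0), (−2,0), (0,2), (0,−2)`. -/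
def offsets4 : Finset (ℤ × ℤ) := {(2, 0), (-2, 0), (0, 2), (0, -2)}

/-- A 4-benefactor: a `6⁺`-frame one of whose four translates by `(±2,0), (0,±2)`
is a 4-frame. -/
def Benefactor4 (C : Set (ℤ × ℤ)) (v : ℤ × ℤ) : Prop :=
  6 ≤ frameCount C v ∧ ∃ d ∈ offsets4, frameCount C (v + d) = 4

/-- A 1-poor frame: a 5-frame having at most one 6-frame in its 2-ball. -/
def OnePoor (C : Set (ℤ × ℤ)) (v : ℤ × ℤ) : Prop :=
  frameCount C v = 5 ∧ countFrames ball2 (fun d => frameCount C (v + d) = 6) ≤ 1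

/-- A 2-poor frame: a 5-frame with no `6⁺`-frame at distance 1 and at most two 6-frames
at distance 2. -/
def TwoPoor (C : Set (ℤ × ℤ)) (v : ℤ × ℤ) : Prop :=
  frameCount C v = 5 ∧ (∀ d ∈ sphere1, frameCount C (v + d) < 6) ∧
    countFrames sphere2 (fun d => frameCount C (v + d) = 6) ≤ 2

/-- A 1-poor-benefactor: a 6-frame at distance 1 from some 1-poor frame which has at most
two 1-poor frames in its 2-ball, each of them at distance 1, has at least two `6⁺`-frames
at distance 2, and is not a 4-benefactor. -/
def OnePoorBenefactor (C : Set (ℤ × ℤ)) (w : ℤ × ℤ) : Prop :=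
  frameCount C w = 6 ∧ (∃ e ∈ sphere1, OnePoor C (w + e)) ∧
    countFrames ball2 (fun e => OnePoor C (w + e)) ≤ 2 ∧
    (∀ e ∈ ball2, OnePoor C (w + e) → e ∈ sphere1) ∧
    2 ≤ countFrames sphere2 (fun e => 6 ≤ frameCount C (w + e)) ∧
    ¬ Benefactor4 C w

lemma triple {C : Set (ℤ × ℤ)} (hC : IsIdCode 2 C) (a b : ℤ) :
    ∃ c ∈ C, c.1 = a ∧ b ≤ c.2 ∧ c.2 ≤ b + 2 := by
  set u : ℤ × ℤ := (a + 2, b + 1) with hu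
  set v : ℤ × ℤ := (a + 1, b + 1) with hv
  have hvu : v ≠ u := by simp [hu, hv, Prod.ext_iff]
  have hne := hC {u} {u, v} (Set.finite_singleton u) (Set.toFinite _)
    (by simp) (by simpa using Set.ncard_insert_le u {v}) (by
      intro h
      exact hvu (by
        have : v ∈ ({u} : Set (ℤ × ℤ)) := h ▸ (by simp : v ∈ ({u, v} : Set (ℤ × ℤ)))
        simpa using this))
  have hsub : kingNS {u} ∩ C ⊆ kingNS {u, v} ∩ C := by
    apply Set.inter_subset_inter_left
    intro x hx
    simp only [kingNS, Set.mem_iUnion] at hx ⊢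
    obtain ⟨w, hw, hx⟩ := hx
    exact ⟨w, by simp at hw; simp [hw], hx⟩
  obtain ⟨c, hcY, hcX⟩ := Set.exists_of_ssubset (Set.ssubset_iff_subset_ne.mpr ⟨hsub, hne⟩)
  obtain ⟨hcN, hcC⟩ := hcY
  have hcnotu : c ∉ kingN u := fun h => hcX ⟨by simp [kingNS]; exact h, hcC⟩
  have hcv : c ∈ kingN v := by
    simp only [kingNS, Set.mem_iUnion] at hcN
    obtain ⟨w, hw, hcw⟩ := hcN
    simp only [Set.mem_insert_iff, Set.mem_singleton_iff] at hw
    rcases hw with rfl | rfl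
    · exact absurd hcw hcnotu
    · exact hcw
  simp only [kingN, Set.mem_setOf_eq, not_and_or, not_le, abs_le, not_forall, hu, hv] at hcv hcnotu
  refine ⟨c, hcC, ?_, ?_, ?_⟩ <;> omega

lemma count_lb {C : Set (ℤ × ℤ)} (hC : IsIdCode 2 C) (n : ℕ) :
    ((2 * n + 1) * ((2 * n + 1) / 3) : ℕ) ≤ (C ∩ (Qn n : Set (ℤ × ℤ))).ncard := by
  classical
  set K : ℕ := (2 * n + 1) / 3 with hK
  have hK3 : 3 * K ≤ 2 * n + 1 := by omega
  choose f hfC hf1 hf2 hf3 using triple hC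
  set T : Finset (ℤ × ℤ) := (Finset.Icc (-(n:ℤ)) n) ×ˢ (Finset.Icc (0:ℤ) ((K:ℤ) - 1)) with hT
  set F : Finset (ℤ × ℤ) := (Qn n).filter (· ∈ C) with hF
  set g : ℤ × ℤ → ℤ × ℤ := fun p => f p.1 (-(n:ℤ) + 3 * p.2) with hg
  have hmem : ∀ p ∈ T, g p ∈ F := by
    rintro ⟨a, k⟩ hp
    simp only [hT, Finset.mem_product, Finset.mem_Icc] at hp
    simp only [hF, Finset.mem_filter, Qn, Finset.mem_Icc, Prod.le_def]
    have h1 := hf1 a (-(n:ℤ) + 3 * k)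
    have h2 := hf2 a (-(n:ℤ) + 3 * k)
    have h3 := hf3 a (-(n:ℤ) + 3 * k)
    refine ⟨⟨⟨?_, ?_⟩, ?_, ?_⟩, hfC _ _⟩ <;> simp only [hg] <;> omega
  have hinj : Set.InjOn g T := by
    rintro ⟨a, k⟩ hp ⟨a', k'⟩ hq heq
    simp only [hT, Finset.coe_product, Set.mem_prod, Finset.coe_Icc, Set.mem_Icc] at hp hq
    have h1 := hf1 a (-(n:ℤ) + 3 * k)
    have h1' := hf1 a' (-(n:ℤ) + 3 * k')
    have h2 := hf2 a (-(n:ℤ) + 3 * k)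
    have h2' := hf2 a' (-(n:ℤ) + 3 * k')
    have h3 := hf3 a (-(n:ℤ) + 3 * k)
    have h3' := hf3 a' (-(n:ℤ) + 3 * k')
    have e1 : (g (a, k)).1 = (g (a', k')).1 := by rw [heq]
    have e2 : (g (a, k)).2 = (g (a', k')).2 := by rw [heq]
    simp only [hg] at e1 e2
    have : a = a' ∧ k = k' := by constructor <;> omega
    simp [Prod.ext_iff, this.1, this.2]
  have hcard : T.card ≤ F.card := Finset.card_le_card_of_injOn g hmem hinj
  have hTcard : T.card = (2 * n + 1) * K := by
    simp only [hT, Finset.card_product, Int.card_Icc]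
    have : ((n:ℤ) + 1 - -(n:ℤ)).toNat = 2 * n + 1 := by omega
    rw [this]
    congr 1
    omega
  have hFset : C ∩ (Qn n : Set (ℤ × ℤ)) = ↑F := by
    ext x
    simp [hF, Set.mem_inter_iff, and_comm]
  rw [hFset, Set.ncard_coe_finset]
  omega

lemma Qn_card (n : ℕ) : (Qn n).card = (2 * n + 1) * (2 * n + 1) := by
  simp only [Qn]
  rw [show (Finset.Icc (-(n : ℤ), -(n : ℤ)) ((n : ℤ), (n : ℤ))) =
      Finset.Icc (-(n:ℤ)) n ×ˢ Finset.Icc (-(n:ℤ)) n from rfl]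
  rw [Finset.card_product, Int.card_Icc]
  have : ((n:ℤ) + 1 - -(n:ℤ)).toNat = 2 * n + 1 := by omega
  rw [this]

/-- Every `(1, ≤ 2)`-identifying code of the king grid has density at least `1/3`. -/
theorem density_ge_1_3 (C : Set (ℤ × ℤ)) (hC : IsIdCode 2 C) :
    (1 : ℝ) / 3 ≤ density C := by
  set f : ℕ → ℝ := fun n => ((C ∩ (Qn n : Set (ℤ × ℤ))).ncard : ℝ) / ((Qn n).card : ℝ) with hf
  have hpos : ∀ n : ℕ, (0:ℝ) < 2 * (n:ℝ) + 1 := fun n => by positivity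
  have hle : ∀ n : ℕ, 1 / 3 - 2 / (3 * (2 * (n : ℝ) + 1)) ≤ f n := by
    intro n
    have hcard := Qn_card n
    have hcount := count_lb hC n
    set K : ℕ := (2 * n + 1) / 3 with hKd
    have hc : ((2 * n + 1 : ℕ) : ℝ) * (K : ℝ) ≤ ((C ∩ (Qn n : Set (ℤ × ℤ))).ncard : ℝ) := by
      exact_mod_cast hcount
    have hK' : 2 * (n : ℝ) - 1 ≤ 3 * (K : ℝ) := by
      have h0 : 2 * n ≤ 3 * K + 1 := by omega
      have : (2 * n : ℝ) ≤ 3 * (K : ℝ) + 1 := by exact_mod_cast h0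
      linarith
    push_cast at hc
    simp only [hf, hcard]
    have heq : (1 / 3 - 2 / (3 * (2 * (n:ℝ) + 1)))
        = (2 * (n:ℝ) - 1) / (3 * (2 * (n:ℝ) + 1)) := by
      field_simp
      ring
    rw [heq, le_div_iff₀ (by positivity)]
    push_cast
    rw [div_mul_eq_mul_div, div_le_iff₀ (by positivity)]
    nlinarith [mul_le_mul_of_nonneg_right hK' (mul_nonneg (hpos n).le (hpos n).le),
      mul_le_mul_of_nonneg_right hc (by positivity : (0:ℝ) ≤ 3 * (2 * (n:ℝ) + 1))]
  have h2 : Filter.Tendsto (fun n : ℕ => 2 / (3 * (2 * (n : ℝ) + 1))) atTop (nhds 0) := by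
    have h1 : Filter.Tendsto (fun n : ℕ => 3 * (2 * (n : ℝ) + 1)) atTop atTop := by
      apply Filter.Tendsto.const_mul_atTop (by norm_num : (0:ℝ) < 3)
      apply Filter.tendsto_atTop_add_const_right
      exact Filter.Tendsto.const_mul_atTop (by norm_num) tendsto_natCast_atTop_atTop
    simpa using Filter.Tendsto.div_atTop (tendsto_const_nhds (x := (2:ℝ))) h1
  have hgt : Filter.Tendsto (fun n : ℕ => 1 / 3 - 2 / (3 * (2 * (n : ℝ) + 1))) atTop
      (nhds (1 / 3)) := by
    have := (tendsto_const_nhds (x := (1/3 : ℝ)) (f := atTop)).sub h2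
    simpa using this
  have hbddf : Filter.IsBoundedUnder (· ≤ ·) atTop f := by
    apply Filter.isBoundedUnder_of
    refine ⟨1, fun n => ?_⟩
    simp only [hf]
    rw [div_le_one (by rw [Qn_card n]; positivity)]
    have : (C ∩ (Qn n : Set (ℤ × ℤ))).ncard ≤ (Qn n).card := by
      rw [← Set.ncard_coe_finset (Qn n)]
      exact Set.ncard_le_ncard Set.inter_subset_right (Finset.finite_toSet _)
    exact_mod_cast this
  have hcobdd : Filter.IsCoboundedUnder (· ≤ ·) atTop
      (fun n : ℕ => 1 / 3 - 2 / (3 * (2 * (n : ℝ) + 1))) :=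
    hgt.isBoundedUnder_ge.isCoboundedUnder_le
  have := limsup_le_limsup (Filter.Eventually.of_forall hle) hcobdd hbddf
  rwa [hgt.limsup_eq] at this
end

section
/- If C is a (1,≤2)-identifying code of the king grid, then every frame contains at least four elements of C, i.e., every frame is a 4^+-frame. -/
open Filter

lemma exists_sep (C : Set (ℤ × ℤ)) (hC : IsIdCode 2 C) (p q : ℤ × ℤ) (hpq : p ≠ q) :
    ∃ z ∈ C, z ∈ kingN q ∧ z ∉ kingN p := by
  have hne : ({p, q} : Set (ℤ × ℤ)) ≠ {p} := by
    intro h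
    apply hpq
    have : q ∈ ({p} : Set (ℤ × ℤ)) := h ▸ (by simp)
    simpa using this.symm
  have h := hC {p, q} {p} (Set.toFinite _) (Set.toFinite _)
    (le_trans (Set.ncard_insert_le _ _) (by simp)) (by simp) hne
  have hsub : kingNS {p} ∩ C ⊆ kingNS {p, q} ∩ C := by
    apply Set.inter_subset_inter_left
    apply Set.biUnion_subset_biUnion_left
    simp
  have : ¬ (kingNS {p, q} ∩ C ⊆ kingNS {p} ∩ C) := fun h' => h (le_antisymm h' hsub)
  obtain ⟨z, hzA, hzB⟩ := Set.not_subset.mp this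
  have hzC : z ∈ C := hzA.2
  have hznp : z ∉ kingN p := by
    intro hz
    exact hzB ⟨by simp [kingNS]; exact hz, hzC⟩
  have hzq : z ∈ kingN q := by
    have := hzA.1
    simp only [kingNS, Set.mem_iUnion, Set.mem_insert_iff, Set.mem_singleton_iff,
      exists_prop] at this
    obtain ⟨w, hw | hw, hzw⟩ := this
    · exact absurd (hw ▸ hzw) hznp
    · exact hw ▸ hzw
  exact ⟨z, hzC, hzq, hznp⟩

lemma mem_frame {v u : ℤ × ℤ}
    (h : 0 ≤ u.1 - v.1 ∧ u.1 - v.1 ≤ 3 ∧ 0 ≤ u.2 - v.2 ∧ u.2 - v.2 ≤ 3 ∧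
      (u.1 - v.1 = 0 ∨ u.1 - v.1 = 3 ∨ u.2 - v.2 = 0 ∨ u.2 - v.2 = 3)) : u ∈ frame v := by
  simp only [frame, Finset.mem_image, Finset.mem_filter, Finset.mem_product, Finset.mem_Icc]
  refine ⟨(u.1 - v.1, u.2 - v.2), ⟨⟨⟨h.1, h.2.1⟩, h.2.2.1, h.2.2.2.1⟩, h.2.2.2.2⟩, ?_⟩
  ext <;> simp 

/-- Every frame contains at least four codewords of a `(1, ≤ 2)`-identifying code. -/
theorem frame_is_four_plus (C : Set (ℤ × ℤ)) (hC : IsIdCode 2 C) (v : ℤ × ℤ) :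
    4 ≤ frameCount C v := by
  -- top: pair (a,c) with a = v+(1,1), c = v+(1,2)
  obtain ⟨z1, hz1C, hz1q, hz1p⟩ := exists_sep C hC (v + (1,1)) (v + (1,2))
    (by simp [Prod.ext_iff])
  obtain ⟨z2, hz2C, hz2q, hz2p⟩ := exists_sep C hC (v + (2,2)) (v + (2,1))
    (by simp [Prod.ext_iff])
  obtain ⟨z3, hz3C, hz3q, hz3p⟩ := exists_sep C hC (v + (1,2)) (v + (2,2))
    (by simp [Prod.ext_iff])
  obtain ⟨z4, hz4C, hz4q, hz4p⟩ := exists_sep C hC (v + (2,1)) (v + (1,1))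
    (by simp [Prod.ext_iff])
  simp only [kingN, Set.mem_setOf_eq, Prod.fst_add, Prod.snd_add, abs_le, not_and_or,
    not_le, not_and] at hz1q hz1p hz2q hz2p hz3q hz3p hz4q hz4p
  -- coordinate facts
  have c1 : v.1 ≤ z1.1 ∧ z1.1 ≤ v.1 + 2 ∧ z1.2 = v.2 + 3 := by omega
  have c2 : v.1 + 1 ≤ z2.1 ∧ z2.1 ≤ v.1 + 3 ∧ z2.2 = v.2 := by omega
  have c3 : z3.1 = v.1 + 3 ∧ v.2 + 1 ≤ z3.2 ∧ z3.2 ≤ v.2 + 3 := by omega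
  have c4 : z4.1 = v.1 ∧ v.2 ≤ z4.2 ∧ z4.2 ≤ v.2 + 2 := by omega
  have hf1 : z1 ∈ frame v := mem_frame (by omega)
  have hf2 : z2 ∈ frame v := mem_frame (by omega)
  have hf3 : z3 ∈ frame v := mem_frame (by omega)
  have hf4 : z4 ∈ frame v := mem_frame (by omega)
  have hne12 : z1 ≠ z2 := fun h => by rw [h] at c1; omega
  have hne13 : z1 ≠ z3 := fun h => by rw [h] at c1; omega
  have hne14 : z1 ≠ z4 := fun h => by rw [h] at c1; omega
  have hne23 : z2 ≠ z3 := fun h => by rw [h] at c2; omega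
  have hne24 : z2 ≠ z4 := fun h => by rw [h] at c2; omega
  have hne34 : z3 ≠ z4 := fun h => by rw [h] at c3; omega
  have hcard : ({z1, z2, z3, z4} : Finset (ℤ × ℤ)).card = 4 := by
    rw [Finset.card_insert_of_notMem (by simp [hne12, hne13, hne14]),
      Finset.card_insert_of_notMem (by simp [hne23, hne24]),
      Finset.card_insert_of_notMem (by simp [hne34]), Finset.card_singleton]
  have hsub : (({z1, z2, z3, z4} : Finset (ℤ × ℤ)) : Set (ℤ × ℤ)) ⊆
      C ∩ (frame v : Set (ℤ × ℤ)) := by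
    intro z hz
    simp only [Finset.coe_insert, Finset.coe_singleton, Set.mem_insert_iff,
      Set.mem_singleton_iff] at hz
    rcases hz with h | h | h | h <;> subst h
    exacts [⟨hz1C, hf1⟩, ⟨hz2C, hf2⟩, ⟨hz3C, hf3⟩, ⟨hz4C, hf4⟩]
  calc 4 = (({z1, z2, z3, z4} : Finset (ℤ × ℤ)) : Set (ℤ × ℤ)).ncard := by
        rw [Set.ncard_coe_finset, hcard]
    _ ≤ (C ∩ (frame v : Set (ℤ × ℤ))).ncard :=
        Set.ncard_le_ncard hsub ((frame v).finite_toSet.inter_of_right C)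
end

section
/- If C is a (1,≤2)-identifying code of the king grid and a frame F contains exactly four elements of C, then these four elements are exactly the four corners of F. -/
open Filter

-- auxiliary
def Ffull : Finset (ℤ × ℤ) :=
  {(0,0),(1,0),(2,0),(3,0),(0,1),(3,1),(0,2),(3,2),(0,3),(1,3),(2,3),(3,3)}
def Ccor : Finset (ℤ × ℤ) := {(0,0),(3,0),(0,3),(3,3)}

set_option maxRecDepth 10000 in
theorem comb_aux : ∀ S ∈ Ffull.powersetCard 4,
    (S ∩ ({(0,3),(1,3),(2,3)} : Finset (ℤ×ℤ))).Nonempty →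
    (S ∩ ({(3,0),(3,1),(3,2)} : Finset (ℤ×ℤ))).Nonempty →
    (S ∩ ({(0,0),(1,0),(2,0)} : Finset (ℤ×ℤ))).Nonempty →
    (S ∩ ({(3,1),(3,2),(3,3)} : Finset (ℤ×ℤ))).Nonempty →
    (S ∩ ({(0,0),(0,1),(0,2)} : Finset (ℤ×ℤ))).Nonempty →
    (S ∩ ({(1,3),(2,3),(3,3)} : Finset (ℤ×ℤ))).Nonempty →
    (S ∩ ({(0,1),(0,2),(0,3)} : Finset (ℤ×ℤ))).Nonempty →
    (S ∩ ({(1,0),(2,0),(3,0)} : Finset (ℤ×ℤ))).Nonempty →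
    (S ∩ Ccor).Nonempty →
    S = Ccor := by decide

lemma kingN_mem_iff (c u : ℤ × ℤ) :
    c ∈ kingN u ↔ (-1 ≤ c.1 - u.1 ∧ c.1 - u.1 ≤ 1) ∧ (-1 ≤ c.2 - u.2 ∧ c.2 - u.2 ≤ 1) := by
  simp [kingN, abs_le, and_assoc]

lemma key_sub {C : Set (ℤ × ℤ)} (hC : IsIdCode 2 C) (x y : ℤ × ℤ) (hxy : y ≠ x) :
    ∃ c ∈ C, c ∈ kingN y ∧ c ∉ kingN x := by
  have hne : ({x} : Set (ℤ × ℤ)) ≠ {x, y} := by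
    intro h
    have : y ∈ ({x} : Set (ℤ × ℤ)) := h ▸ (by simp : y ∈ ({x, y} : Set (ℤ × ℤ)))
    exact hxy (by simpa using this)
  have h := hC {x} {x, y} (Set.toFinite _) (Set.toFinite _)
    (by simp) ((Set.ncard_insert_le _ _).trans (by simp)) hne
  rw [kingNS, kingNS] at h
  simp only [Set.biUnion_singleton, Set.biUnion_pair] at h
  have hsub : kingN x ∩ C ⊆ (kingN x ∪ kingN y) ∩ C :=
    Set.inter_subset_inter_left _ Set.subset_union_left
  obtain ⟨c, hc1, hc2⟩ := Set.exists_of_ssubset (hsub.ssubset_of_ne h)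
  refine ⟨c, hc1.2, ?_, fun hcx => hc2 ⟨hcx, hc1.2⟩⟩
  rcases hc1.1 with h' | h'
  · exact absurd ⟨h', hc1.2⟩ hc2
  · exact h'

lemma key_cross {C : Set (ℤ × ℤ)} (hC : IsIdCode 2 C) (x1 x2 y1 y2 : ℤ × ℤ)
    (hne : ({x1, x2} : Set (ℤ × ℤ)) ≠ {y1, y2}) :
    ∃ c ∈ C, ((c ∈ kingN x1 ∨ c ∈ kingN x2) ∧ (c ∉ kingN y1 ∧ c ∉ kingN y2)) ∨
             ((c ∈ kingN y1 ∨ c ∈ kingN y2) ∧ (c ∉ kingN x1 ∧ c ∉ kingN x2)) := by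
  have h := hC {x1, x2} {y1, y2} (Set.toFinite _) (Set.toFinite _)
    ((Set.ncard_insert_le _ _).trans (by simp)) ((Set.ncard_insert_le _ _).trans (by simp)) hne
  rw [kingNS, kingNS] at h
  simp only [Set.biUnion_pair] at h
  by_contra hcon
  push_neg at hcon
  apply h
  ext c
  simp only [Set.mem_inter_iff, Set.mem_union]
  constructor
  · rintro ⟨hA, hcC⟩
    have := hcon c hcC
    refine ⟨?_, hcC⟩
    tauto
  · rintro ⟨hB, hcC⟩
    have := hcon c hcC
    refine ⟨?_, hcC⟩
    tauto

set_option maxHeartbeats 2000000 in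
/-- If a frame contains exactly four codewords of a `(1, ≤ 2)`-identifying code, then
these codewords are exactly the four corners of the frame. -/
theorem four_frame_codewords_eq_corners (C : Set (ℤ × ℤ)) (hC : IsIdCode 2 C) (v : ℤ × ℤ)
    (h4 : frameCount C v = 4) :
    C ∩ (frame v : Set (ℤ × ℤ)) = (corners v : Set (ℤ × ℤ)) := by
  classical
  set T0 : Finset (ℤ × ℤ) := Ffull.filter (fun p => v + p ∈ C) with hT0def
  have mk : ∀ p : ℤ × ℤ, p ∈ Ffull → ∀ c, c ∈ C → c - v = p → p ∈ T0 := by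
    intro p hp c hc h
    refine Finset.mem_filter.2 ⟨hp, ?_⟩
    rw [← sub_eq_iff_eq_add'.mp h]; exact hc
  have hne1 : ∀ a b : ℤ × ℤ, a ≠ b → v + a ≠ v + b := by
    intro a b hab h; exact hab (add_left_cancel h)
  -- the 8 side-triple constraints
  have tri : ∀ x y : ℤ × ℤ, y ≠ x → ∀ p1 p2 p3 : ℤ × ℤ,
      p1 ∈ Ffull → p2 ∈ Ffull → p3 ∈ Ffull →
      (∀ c : ℤ × ℤ, c ∈ kingN (v + y) → c ∉ kingN (v + x) →
        (c - v = p1 ∨ c - v = p2 ∨ c - v = p3)) →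
      (T0 ∩ ({p1, p2, p3} : Finset (ℤ × ℤ))).Nonempty := by
    intro x y hxy p1 p2 p3 hp1 hp2 hp3 hder
    obtain ⟨c, hcC, hc1, hc2⟩ := key_sub hC (v + x) (v + y) (hne1 _ _ hxy)
    rcases hder c hc1 hc2 with h | h | h
    · exact ⟨p1, Finset.mem_inter.2 ⟨mk _ hp1 c hcC h, by simp⟩⟩
    · exact ⟨p2, Finset.mem_inter.2 ⟨mk _ hp2 c hcC h, by simp⟩⟩
    · exact ⟨p3, Finset.mem_inter.2 ⟨mk _ hp3 c hcC h, by simp⟩⟩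
  have h1 : (T0 ∩ ({(0,3),(1,3),(2,3)} : Finset (ℤ×ℤ))).Nonempty := by
    refine tri (1,1) (1,2) (by decide) _ _ _ (by decide) (by decide) (by decide)
      (fun c hc1 hc2 => ?_)
    rw [kingN_mem_iff] at hc1 hc2
    simp only [Prod.fst_add, Prod.snd_add, Prod.ext_iff, Prod.fst_sub, Prod.snd_sub]
      at hc1 hc2 ⊢
    omega
  have h2 : (T0 ∩ ({(3,0),(3,1),(3,2)} : Finset (ℤ×ℤ))).Nonempty := by
    refine tri (1,1) (2,1) (by decide) _ _ _ (by decide) (by decide) (by decide)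
      (fun c hc1 hc2 => ?_)
    rw [kingN_mem_iff] at hc1 hc2
    simp only [Prod.fst_add, Prod.snd_add, Prod.ext_iff, Prod.fst_sub, Prod.snd_sub]
      at hc1 hc2 ⊢
    omega
  have h3 : (T0 ∩ ({(0,0),(1,0),(2,0)} : Finset (ℤ×ℤ))).Nonempty := by
    refine tri (1,2) (1,1) (by decide) _ _ _ (by decide) (by decide) (by decide)
      (fun c hc1 hc2 => ?_)
    rw [kingN_mem_iff] at hc1 hc2
    simp only [Prod.fst_add, Prod.snd_add, Prod.ext_iff, Prod.fst_sub, Prod.snd_sub]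
      at hc1 hc2 ⊢
    omega
  have h4' : (T0 ∩ ({(3,1),(3,2),(3,3)} : Finset (ℤ×ℤ))).Nonempty := by
    refine tri (1,2) (2,2) (by decide) _ _ _ (by decide) (by decide) (by decide)
      (fun c hc1 hc2 => ?_)
    rw [kingN_mem_iff] at hc1 hc2
    simp only [Prod.fst_add, Prod.snd_add, Prod.ext_iff, Prod.fst_sub, Prod.snd_sub]
      at hc1 hc2 ⊢
    omega
  have h5 : (T0 ∩ ({(0,0),(0,1),(0,2)} : Finset (ℤ×ℤ))).Nonempty := by
    refine tri (2,1) (1,1) (by decide) _ _ _ (by decide) (by decide) (by decide)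
      (fun c hc1 hc2 => ?_)
    rw [kingN_mem_iff] at hc1 hc2
    simp only [Prod.fst_add, Prod.snd_add, Prod.ext_iff, Prod.fst_sub, Prod.snd_sub]
      at hc1 hc2 ⊢
    omega
  have h6 : (T0 ∩ ({(1,3),(2,3),(3,3)} : Finset (ℤ×ℤ))).Nonempty := by
    refine tri (2,1) (2,2) (by decide) _ _ _ (by decide) (by decide) (by decide)
      (fun c hc1 hc2 => ?_)
    rw [kingN_mem_iff] at hc1 hc2
    simp only [Prod.fst_add, Prod.snd_add, Prod.ext_iff, Prod.fst_sub, Prod.snd_sub]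
      at hc1 hc2 ⊢
    omega
  have h7 : (T0 ∩ ({(0,1),(0,2),(0,3)} : Finset (ℤ×ℤ))).Nonempty := by
    refine tri (2,2) (1,2) (by decide) _ _ _ (by decide) (by decide) (by decide)
      (fun c hc1 hc2 => ?_)
    rw [kingN_mem_iff] at hc1 hc2
    simp only [Prod.fst_add, Prod.snd_add, Prod.ext_iff, Prod.fst_sub, Prod.snd_sub]
      at hc1 hc2 ⊢
    omega
  have h8 : (T0 ∩ ({(1,0),(2,0),(3,0)} : Finset (ℤ×ℤ))).Nonempty := by
    refine tri (2,2) (2,1) (by decide) _ _ _ (by decide) (by decide) (by decide)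
      (fun c hc1 hc2 => ?_)
    rw [kingN_mem_iff] at hc1 hc2
    simp only [Prod.fst_add, Prod.snd_add, Prod.ext_iff, Prod.fst_sub, Prod.snd_sub]
      at hc1 hc2 ⊢
    omega
  -- the corner constraint
  have h9 : (T0 ∩ Ccor).Nonempty := by
    have hne : ({v + (1,1), v + (2,2)} : Set (ℤ × ℤ)) ≠ {v + (1,2), v + (2,1)} := by
      intro h
      have : v + ((1:ℤ),(1:ℤ)) ∈ ({v + (1,2), v + (2,1)} : Set (ℤ × ℤ)) :=
        h ▸ Set.mem_insert _ _
      simp only [Set.mem_insert_iff, Set.mem_singleton_iff] at this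
      rcases this with h' | h' <;> exact absurd (add_left_cancel h') (by decide)
    obtain ⟨c, hcC, hc⟩ := key_cross hC (v + (1,1)) (v + (2,2)) (v + (1,2)) (v + (2,1)) hne
    have hco : c - v = ((0:ℤ),(0:ℤ)) ∨ c - v = (3,3) ∨ c - v = (0,3) ∨ c - v = (3,0) := by
      simp only [kingN_mem_iff, Prod.fst_add, Prod.snd_add] at hc
      simp only [Prod.ext_iff, Prod.fst_sub, Prod.snd_sub]
      omega
    have hF : c - v ∈ Ffull := by rcases hco with h|h|h|h <;> rw [h] <;> decide
    have hD : c - v ∈ Ccor := by rcases hco with h|h|h|h <;> rw [h] <;> decide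
    exact ⟨c - v, Finset.mem_inter.2 ⟨mk _ hF c hcC rfl, hD⟩⟩
  -- frame as image
  have hFeq : frame v = Ffull.image (fun p => v + p) := by
    rw [frame]
    congr 1
    decide
  have hT : C ∩ (frame v : Set (ℤ × ℤ)) = (fun p => v + p) '' (T0 : Set (ℤ × ℤ)) := by
    rw [hFeq]
    ext z
    simp only [Set.mem_inter_iff, Finset.coe_image, Set.mem_image, Finset.mem_coe,
      hT0def, Finset.mem_filter]
    constructor
    · rintro ⟨hzC, p, hp, rfl⟩; exact ⟨p, ⟨hp, hzC⟩, rfl⟩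
    · rintro ⟨p, ⟨hp, hpC⟩, rfl⟩; exact ⟨hpC, p, hp, rfl⟩
  have hinj : Function.Injective (fun p : ℤ × ℤ => v + p) := fun a b h => add_left_cancel h
  have hcard : T0.card = 4 := by
    rw [frameCount, hT, Set.ncard_image_of_injective _ hinj, Set.ncard_coe_finset] at h4
    exact h4
  have hS : T0 ∈ Ffull.powersetCard 4 :=
    Finset.mem_powersetCard.2 ⟨Finset.filter_subset _ _, hcard⟩
  have hfin := comb_aux T0 hS h1 h2 h3 h4' h5 h6 h7 h8 h9
  rw [hT, hfin]
  have hcor : (corners v : Finset (ℤ × ℤ)) = Ccor.image (fun p => v + p) := by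
    simp [corners, Ccor, Finset.image_insert, Finset.image_singleton]
  rw [hcor, Finset.coe_image]
end

section
/- Let C be a (1,≤2)-identifying code of the king grid. If a frame F contains a corner element c of C and two non-corner elements of C lying on a side of F that does not contain c, then F contains at least six elements of C (i.e., F is a 6^+-frame). -/
open Filter

lemma forced {C : Set (ℤ × ℤ)} (hC : IsIdCode 2 C) (x y : ℤ × ℤ) (hxy : x ≠ y) :
    ∃ w, w ∈ C ∧ w ∈ kingN y ∧ w ∉ kingN x := by
  have hne : ({x} : Set (ℤ × ℤ)) ≠ {x, y} := by
    intro h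
    have : y ∈ ({x} : Set (ℤ × ℤ)) := by rw [h]; simp
    exact hxy (Set.mem_singleton_iff.1 this).symm
  have h := hC {x} {x, y} (Set.finite_singleton x) (Set.toFinite _)
    (by simp) (by rw [Set.ncard_pair hxy]) hne
  have h1 : kingNS {x} = kingN x := by simp [kingNS]
  have h2 : kingNS {x, y} = kingN x ∪ kingN y := by simp [kingNS]
  rw [h1, h2] at h
  have hsub : kingN x ∩ C ⊆ (kingN x ∪ kingN y) ∩ C :=
    Set.inter_subset_inter_left _ Set.subset_union_left
  obtain ⟨w, hw1, hw2⟩ := Set.exists_of_ssubset (hsub.ssubset_of_ne h)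
  refine ⟨w, hw1.2, ?_, fun hwx => hw2 ⟨hwx, hw1.2⟩⟩
  rcases hw1.1 with h | h
  · exact absurd ⟨h, hw1.2⟩ hw2
  · exact h

lemma six_le (C : Set (ℤ × ℤ)) (v o₁ o₂ o₃ o₄ o₅ o₆ : ℤ × ℤ)
    (h₁ : v + o₁ ∈ C) (h₂ : v + o₂ ∈ C) (h₃ : v + o₃ ∈ C)
    (h₄ : v + o₄ ∈ C) (h₅ : v + o₅ ∈ C) (h₆ : v + o₆ ∈ C)
    (hcard : ({o₁, o₂, o₃, o₄, o₅, o₆} : Finset (ℤ × ℤ)).card = 6)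
    (hfr : ({o₁, o₂, o₃, o₄, o₅, o₆} : Finset (ℤ × ℤ)) ⊆
      ((Finset.Icc (0 : ℤ) 3) ×ˢ (Finset.Icc (0 : ℤ) 3)).filter
        fun p => p.1 = 0 ∨ p.1 = 3 ∨ p.2 = 0 ∨ p.2 = 3) :
    6 ≤ frameCount C v := by
  classical
  set F : Finset (ℤ × ℤ) := ({o₁, o₂, o₃, o₄, o₅, o₆} : Finset (ℤ × ℤ)).image (fun o => v + o)
    with hF
  have hcardF : F.card = 6 := by
    rw [hF, Finset.card_image_of_injective _ (add_right_injective v), hcard]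
  have hsub : (F : Set (ℤ × ℤ)) ⊆ C ∩ (frame v : Set (ℤ × ℤ)) := by
    intro u hu
    simp only [hF, Finset.coe_image, Set.mem_image, Finset.mem_coe] at hu
    obtain ⟨o, ho, rfl⟩ := hu
    constructor
    · simp only [Finset.mem_insert, Finset.mem_singleton] at ho
      rcases ho with rfl | rfl | rfl | rfl | rfl | rfl <;> assumption
    · exact Finset.mem_coe.2 (Finset.mem_image.2 ⟨o, hfr ho, rfl⟩)
  calc (6 : ℕ) = F.card := hcardF.symm
    _ = (F : Set (ℤ × ℤ)).ncard := (Set.ncard_coe_finset F).symm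
    _ ≤ (C ∩ (frame v : Set (ℤ × ℤ))).ncard :=
        Set.ncard_le_ncard hsub (Set.Finite.inter_of_right (frame v).finite_toSet C)


/-- If a frame contains a corner codeword `c` and two non-corner codewords on a side
not containing `c`, then it is a `6⁺`-frame. -/
theorem corner_and_two_noncorner_codewords (C : Set (ℤ × ℤ)) (hC : IsIdCode 2 C)
    (v c p₁ p₂ : ℤ × ℤ)
    (hc : c ∈ C) (hcc : c ∈ corners v)
    (h₁ : p₁ ∈ C) (h₂ : p₂ ∈ C) (hne : p₁ ≠ p₂)
    (hnc₁ : p₁ ∉ corners v) (hnc₂ : p₂ ∉ corners v)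
    (S : Finset (ℤ × ℤ)) (hS : S ∈ sides v) (hp₁ : p₁ ∈ S) (hp₂ : p₂ ∈ S) (hcS : c ∉ S) :
    6 ≤ frameCount C v := by
  simp only [corners, Finset.mem_insert, Finset.mem_singleton] at hcc hnc₁ hnc₂
  have hS4 : S = {v + (0, 0), v + (1, 0), v + (2, 0), v + (3, 0)} ∨ S = {v + (0, 3), v + (1, 3), v + (2, 3), v + (3, 3)} ∨ S = {v + (0, 0), v + (0, 1), v + (0, 2), v + (0, 3)} ∨ S = {v + (3, 0), v + (3, 1), v + (3, 2), v + (3, 3)} := by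
    simpa [sides] using hS
  rcases hS4 with rfl | rfl | rfl | rfl
  · -- S = bottom
    simp only [Finset.mem_insert, Finset.mem_singleton] at hp₁ hp₂ hcS
    have e₁ : p₁ = v + (1, 0) ∨ p₁ = v + (2, 0) := by
      rcases hp₁ with h | h | h | h
      · exact absurd (Or.inl h) hnc₁
      · exact Or.inl h
      · exact Or.inr (h)
      · exact absurd (Or.inr (Or.inl h)) hnc₁
    have e₂ : p₂ = v + (1, 0) ∨ p₂ = v + (2, 0) := by
      rcases hp₂ with h | h | h | h
      · exact absurd (Or.inl h) hnc₂
      · exact Or.inl h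
      · exact Or.inr (h)
      · exact absurd (Or.inr (Or.inl h)) hnc₂
    have ec : c = v + (0, 3) ∨ c = v + (3, 3) := by
      rcases hcc with h | h | h | h
      · exact absurd (Or.inl h) hcS
      · exact absurd (Or.inr (Or.inr (Or.inr (h)))) hcS
      · exact Or.inl h
      · exact Or.inr (h)
    have hp : (v + (1, 0) ∈ C) ∧ (v + (2, 0) ∈ C) := by
      rcases e₁ with rfl | rfl <;> rcases e₂ with rfl | rfl
      · exact absurd rfl hne
      · exact ⟨h₁, h₂⟩
      · exact ⟨h₂, h₁⟩
      · exact absurd rfl hne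
    obtain ⟨hA, hB⟩ := hp
    rcases ec with rfl | rfl
    · -- c = (0, 3)
      obtain ⟨w1, hw1C, hy1, hx1⟩ := forced hC (v + (2, 1)) (v + (2, 2)) (by simp [Prod.ext_iff])
      have hd1 : w1 = v + (1, 3) ∨ w1 = v + (2, 3) ∨ w1 = v + (3, 3) := by
        simp only [kingN, Set.mem_setOf_eq, Prod.fst_add, Prod.snd_add, abs_le, Prod.ext_iff] at hy1 hx1 ⊢
        omega
      obtain ⟨w2, hw2C, hy2, hx2⟩ := forced hC (v + (2, 1)) (v + (1, 1)) (by simp [Prod.ext_iff])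
      have hd2 : w2 = v + (0, 0) ∨ w2 = v + (0, 1) ∨ w2 = v + (0, 2) := by
        simp only [kingN, Set.mem_setOf_eq, Prod.fst_add, Prod.snd_add, abs_le, Prod.ext_iff] at hy2 hx2 ⊢
        omega
      obtain ⟨w3, hw3C, hy3, hx3⟩ := forced hC (v + (1, 1)) (v + (2, 1)) (by simp [Prod.ext_iff])
      have hd3 : w3 = v + (3, 0) ∨ w3 = v + (3, 1) ∨ w3 = v + (3, 2) := by
        simp only [kingN, Set.mem_setOf_eq, Prod.fst_add, Prod.snd_add, abs_le, Prod.ext_iff] at hy3 hx3 ⊢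
        omega
      rcases hd1 with rfl | rfl | rfl <;> rcases hd2 with rfl | rfl | rfl <;>
        rcases hd3 with rfl | rfl | rfl <;>
        exact six_le C v _ _ _ _ _ _ hA hB hc hw1C hw2C hw3C (by decide) (by decide)
    · -- c = (3, 3)
      obtain ⟨w1, hw1C, hy1, hx1⟩ := forced hC (v + (1, 1)) (v + (1, 2)) (by simp [Prod.ext_iff])
      have hd1 : w1 = v + (0, 3) ∨ w1 = v + (1, 3) ∨ w1 = v + (2, 3) := by
        simp only [kingN, Set.mem_setOf_eq, Prod.fst_add, Prod.snd_add, abs_le, Prod.ext_iff] at hy1 hx1 ⊢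
        omega
      obtain ⟨w2, hw2C, hy2, hx2⟩ := forced hC (v + (1, 1)) (v + (2, 1)) (by simp [Prod.ext_iff])
      have hd2 : w2 = v + (3, 0) ∨ w2 = v + (3, 1) ∨ w2 = v + (3, 2) := by
        simp only [kingN, Set.mem_setOf_eq, Prod.fst_add, Prod.snd_add, abs_le, Prod.ext_iff] at hy2 hx2 ⊢
        omega
      obtain ⟨w3, hw3C, hy3, hx3⟩ := forced hC (v + (2, 1)) (v + (1, 1)) (by simp [Prod.ext_iff])
      have hd3 : w3 = v + (0, 0) ∨ w3 = v + (0, 1) ∨ w3 = v + (0, 2) := by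
        simp only [kingN, Set.mem_setOf_eq, Prod.fst_add, Prod.snd_add, abs_le, Prod.ext_iff] at hy3 hx3 ⊢
        omega
      rcases hd1 with rfl | rfl | rfl <;> rcases hd2 with rfl | rfl | rfl <;>
        rcases hd3 with rfl | rfl | rfl <;>
        exact six_le C v _ _ _ _ _ _ hA hB hc hw1C hw2C hw3C (by decide) (by decide)
  · -- S = top
    simp only [Finset.mem_insert, Finset.mem_singleton] at hp₁ hp₂ hcS
    have e₁ : p₁ = v + (1, 3) ∨ p₁ = v + (2, 3) := by
      rcases hp₁ with h | h | h | h
      · exact absurd (Or.inr (Or.inr (Or.inl h))) hnc₁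
      · exact Or.inl h
      · exact Or.inr (h)
      · exact absurd (Or.inr (Or.inr (Or.inr (h)))) hnc₁
    have e₂ : p₂ = v + (1, 3) ∨ p₂ = v + (2, 3) := by
      rcases hp₂ with h | h | h | h
      · exact absurd (Or.inr (Or.inr (Or.inl h))) hnc₂
      · exact Or.inl h
      · exact Or.inr (h)
      · exact absurd (Or.inr (Or.inr (Or.inr (h)))) hnc₂
    have ec : c = v + (0, 0) ∨ c = v + (3, 0) := by
      rcases hcc with h | h | h | h
      · exact Or.inl h
      · exact Or.inr (h)
      · exact absurd (Or.inl h) hcS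
      · exact absurd (Or.inr (Or.inr (Or.inr (h)))) hcS
    have hp : (v + (1, 3) ∈ C) ∧ (v + (2, 3) ∈ C) := by
      rcases e₁ with rfl | rfl <;> rcases e₂ with rfl | rfl
      · exact absurd rfl hne
      · exact ⟨h₁, h₂⟩
      · exact ⟨h₂, h₁⟩
      · exact absurd rfl hne
    obtain ⟨hA, hB⟩ := hp
    rcases ec with rfl | rfl
    · -- c = (0, 0)
      obtain ⟨w1, hw1C, hy1, hx1⟩ := forced hC (v + (2, 2)) (v + (2, 1)) (by simp [Prod.ext_iff])
      have hd1 : w1 = v + (1, 0) ∨ w1 = v + (2, 0) ∨ w1 = v + (3, 0) := by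
        simp only [kingN, Set.mem_setOf_eq, Prod.fst_add, Prod.snd_add, abs_le, Prod.ext_iff] at hy1 hx1 ⊢
        omega
      obtain ⟨w2, hw2C, hy2, hx2⟩ := forced hC (v + (2, 2)) (v + (1, 2)) (by simp [Prod.ext_iff])
      have hd2 : w2 = v + (0, 1) ∨ w2 = v + (0, 2) ∨ w2 = v + (0, 3) := by
        simp only [kingN, Set.mem_setOf_eq, Prod.fst_add, Prod.snd_add, abs_le, Prod.ext_iff] at hy2 hx2 ⊢
        omega
      obtain ⟨w3, hw3C, hy3, hx3⟩ := forced hC (v + (1, 2)) (v + (2, 2)) (by simp [Prod.ext_iff])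
      have hd3 : w3 = v + (3, 1) ∨ w3 = v + (3, 2) ∨ w3 = v + (3, 3) := by
        simp only [kingN, Set.mem_setOf_eq, Prod.fst_add, Prod.snd_add, abs_le, Prod.ext_iff] at hy3 hx3 ⊢
        omega
      rcases hd1 with rfl | rfl | rfl <;> rcases hd2 with rfl | rfl | rfl <;>
        rcases hd3 with rfl | rfl | rfl <;>
        exact six_le C v _ _ _ _ _ _ hA hB hc hw1C hw2C hw3C (by decide) (by decide)
    · -- c = (3, 0)
      obtain ⟨w1, hw1C, hy1, hx1⟩ := forced hC (v + (1, 2)) (v + (1, 1)) (by simp [Prod.ext_iff])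
      have hd1 : w1 = v + (0, 0) ∨ w1 = v + (1, 0) ∨ w1 = v + (2, 0) := by
        simp only [kingN, Set.mem_setOf_eq, Prod.fst_add, Prod.snd_add, abs_le, Prod.ext_iff] at hy1 hx1 ⊢
        omega
      obtain ⟨w2, hw2C, hy2, hx2⟩ := forced hC (v + (1, 2)) (v + (2, 2)) (by simp [Prod.ext_iff])
      have hd2 : w2 = v + (3, 1) ∨ w2 = v + (3, 2) ∨ w2 = v + (3, 3) := by
        simp only [kingN, Set.mem_setOf_eq, Prod.fst_add, Prod.snd_add, abs_le, Prod.ext_iff] at hy2 hx2 ⊢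
        omega
      obtain ⟨w3, hw3C, hy3, hx3⟩ := forced hC (v + (2, 2)) (v + (1, 2)) (by simp [Prod.ext_iff])
      have hd3 : w3 = v + (0, 1) ∨ w3 = v + (0, 2) ∨ w3 = v + (0, 3) := by
        simp only [kingN, Set.mem_setOf_eq, Prod.fst_add, Prod.snd_add, abs_le, Prod.ext_iff] at hy3 hx3 ⊢
        omega
      rcases hd1 with rfl | rfl | rfl <;> rcases hd2 with rfl | rfl | rfl <;>
        rcases hd3 with rfl | rfl | rfl <;>
        exact six_le C v _ _ _ _ _ _ hA hB hc hw1C hw2C hw3C (by decide) (by decide)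
  · -- S = left
    simp only [Finset.mem_insert, Finset.mem_singleton] at hp₁ hp₂ hcS
    have e₁ : p₁ = v + (0, 1) ∨ p₁ = v + (0, 2) := by
      rcases hp₁ with h | h | h | h
      · exact absurd (Or.inl h) hnc₁
      · exact Or.inl h
      · exact Or.inr (h)
      · exact absurd (Or.inr (Or.inr (Or.inl h))) hnc₁
    have e₂ : p₂ = v + (0, 1) ∨ p₂ = v + (0, 2) := by
      rcases hp₂ with h | h | h | h
      · exact absurd (Or.inl h) hnc₂
      · exact Or.inl h
      · exact Or.inr (h)
      · exact absurd (Or.inr (Or.inr (Or.inl h))) hnc₂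
    have ec : c = v + (3, 0) ∨ c = v + (3, 3) := by
      rcases hcc with h | h | h | h
      · exact absurd (Or.inl h) hcS
      · exact Or.inl h
      · exact absurd (Or.inr (Or.inr (Or.inr (h)))) hcS
      · exact Or.inr (h)
    have hp : (v + (0, 1) ∈ C) ∧ (v + (0, 2) ∈ C) := by
      rcases e₁ with rfl | rfl <;> rcases e₂ with rfl | rfl
      · exact absurd rfl hne
      · exact ⟨h₁, h₂⟩
      · exact ⟨h₂, h₁⟩
      · exact absurd rfl hne
    obtain ⟨hA, hB⟩ := hp
    rcases ec with rfl | rfl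
    · -- c = (3, 0)
      obtain ⟨w1, hw1C, hy1, hx1⟩ := forced hC (v + (1, 2)) (v + (2, 2)) (by simp [Prod.ext_iff])
      have hd1 : w1 = v + (3, 1) ∨ w1 = v + (3, 2) ∨ w1 = v + (3, 3) := by
        simp only [kingN, Set.mem_setOf_eq, Prod.fst_add, Prod.snd_add, abs_le, Prod.ext_iff] at hy1 hx1 ⊢
        omega
      obtain ⟨w2, hw2C, hy2, hx2⟩ := forced hC (v + (1, 2)) (v + (1, 1)) (by simp [Prod.ext_iff])
      have hd2 : w2 = v + (0, 0) ∨ w2 = v + (1, 0) ∨ w2 = v + (2, 0) := by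
        simp only [kingN, Set.mem_setOf_eq, Prod.fst_add, Prod.snd_add, abs_le, Prod.ext_iff] at hy2 hx2 ⊢
        omega
      obtain ⟨w3, hw3C, hy3, hx3⟩ := forced hC (v + (1, 1)) (v + (1, 2)) (by simp [Prod.ext_iff])
      have hd3 : w3 = v + (0, 3) ∨ w3 = v + (1, 3) ∨ w3 = v + (2, 3) := by
        simp only [kingN, Set.mem_setOf_eq, Prod.fst_add, Prod.snd_add, abs_le, Prod.ext_iff] at hy3 hx3 ⊢
        omega
      rcases hd1 with rfl | rfl | rfl <;> rcases hd2 with rfl | rfl | rfl <;>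
        rcases hd3 with rfl | rfl | rfl <;>
        exact six_le C v _ _ _ _ _ _ hA hB hc hw1C hw2C hw3C (by decide) (by decide)
    · -- c = (3, 3)
      obtain ⟨w1, hw1C, hy1, hx1⟩ := forced hC (v + (1, 1)) (v + (2, 1)) (by simp [Prod.ext_iff])
      have hd1 : w1 = v + (3, 0) ∨ w1 = v + (3, 1) ∨ w1 = v + (3, 2) := by
        simp only [kingN, Set.mem_setOf_eq, Prod.fst_add, Prod.snd_add, abs_le, Prod.ext_iff] at hy1 hx1 ⊢
        omega
      obtain ⟨w2, hw2C, hy2, hx2⟩ := forced hC (v + (1, 1)) (v + (1, 2)) (by simp [Prod.ext_iff])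
      have hd2 : w2 = v + (0, 3) ∨ w2 = v + (1, 3) ∨ w2 = v + (2, 3) := by
        simp only [kingN, Set.mem_setOf_eq, Prod.fst_add, Prod.snd_add, abs_le, Prod.ext_iff] at hy2 hx2 ⊢
        omega
      obtain ⟨w3, hw3C, hy3, hx3⟩ := forced hC (v + (1, 2)) (v + (1, 1)) (by simp [Prod.ext_iff])
      have hd3 : w3 = v + (0, 0) ∨ w3 = v + (1, 0) ∨ w3 = v + (2, 0) := by
        simp only [kingN, Set.mem_setOf_eq, Prod.fst_add, Prod.snd_add, abs_le, Prod.ext_iff] at hy3 hx3 ⊢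
        omega
      rcases hd1 with rfl | rfl | rfl <;> rcases hd2 with rfl | rfl | rfl <;>
        rcases hd3 with rfl | rfl | rfl <;>
        exact six_le C v _ _ _ _ _ _ hA hB hc hw1C hw2C hw3C (by decide) (by decide)
  · -- S = right
    simp only [Finset.mem_insert, Finset.mem_singleton] at hp₁ hp₂ hcS
    have e₁ : p₁ = v + (3, 1) ∨ p₁ = v + (3, 2) := by
      rcases hp₁ with h | h | h | h
      · exact absurd (Or.inr (Or.inl h)) hnc₁
      · exact Or.inl h
      · exact Or.inr (h)
      · exact absurd (Or.inr (Or.inr (Or.inr (h)))) hnc₁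
    have e₂ : p₂ = v + (3, 1) ∨ p₂ = v + (3, 2) := by
      rcases hp₂ with h | h | h | h
      · exact absurd (Or.inr (Or.inl h)) hnc₂
      · exact Or.inl h
      · exact Or.inr (h)
      · exact absurd (Or.inr (Or.inr (Or.inr (h)))) hnc₂
    have ec : c = v + (0, 0) ∨ c = v + (0, 3) := by
      rcases hcc with h | h | h | h
      · exact Or.inl h
      · exact absurd (Or.inl h) hcS
      · exact Or.inr (h)
      · exact absurd (Or.inr (Or.inr (Or.inr (h)))) hcS
    have hp : (v + (3, 1) ∈ C) ∧ (v + (3, 2) ∈ C) := by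
      rcases e₁ with rfl | rfl <;> rcases e₂ with rfl | rfl
      · exact absurd rfl hne
      · exact ⟨h₁, h₂⟩
      · exact ⟨h₂, h₁⟩
      · exact absurd rfl hne
    obtain ⟨hA, hB⟩ := hp
    rcases ec with rfl | rfl
    · -- c = (0, 0)
      obtain ⟨w1, hw1C, hy1, hx1⟩ := forced hC (v + (2, 2)) (v + (1, 2)) (by simp [Prod.ext_iff])
      have hd1 : w1 = v + (0, 1) ∨ w1 = v + (0, 2) ∨ w1 = v + (0, 3) := by
        simp only [kingN, Set.mem_setOf_eq, Prod.fst_add, Prod.snd_add, abs_le, Prod.ext_iff] at hy1 hx1 ⊢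
        omega
      obtain ⟨w2, hw2C, hy2, hx2⟩ := forced hC (v + (2, 2)) (v + (2, 1)) (by simp [Prod.ext_iff])
      have hd2 : w2 = v + (1, 0) ∨ w2 = v + (2, 0) ∨ w2 = v + (3, 0) := by
        simp only [kingN, Set.mem_setOf_eq, Prod.fst_add, Prod.snd_add, abs_le, Prod.ext_iff] at hy2 hx2 ⊢
        omega
      obtain ⟨w3, hw3C, hy3, hx3⟩ := forced hC (v + (2, 1)) (v + (2, 2)) (by simp [Prod.ext_iff])
      have hd3 : w3 = v + (1, 3) ∨ w3 = v + (2, 3) ∨ w3 = v + (3, 3) := by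
        simp only [kingN, Set.mem_setOf_eq, Prod.fst_add, Prod.snd_add, abs_le, Prod.ext_iff] at hy3 hx3 ⊢
        omega
      rcases hd1 with rfl | rfl | rfl <;> rcases hd2 with rfl | rfl | rfl <;>
        rcases hd3 with rfl | rfl | rfl <;>
        exact six_le C v _ _ _ _ _ _ hA hB hc hw1C hw2C hw3C (by decide) (by decide)
    · -- c = (0, 3)
      obtain ⟨w1, hw1C, hy1, hx1⟩ := forced hC (v + (2, 1)) (v + (1, 1)) (by simp [Prod.ext_iff])
      have hd1 : w1 = v + (0, 0) ∨ w1 = v + (0, 1) ∨ w1 = v + (0, 2) := by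
        simp only [kingN, Set.mem_setOf_eq, Prod.fst_add, Prod.snd_add, abs_le, Prod.ext_iff] at hy1 hx1 ⊢
        omega
      obtain ⟨w2, hw2C, hy2, hx2⟩ := forced hC (v + (2, 1)) (v + (2, 2)) (by simp [Prod.ext_iff])
      have hd2 : w2 = v + (1, 3) ∨ w2 = v + (2, 3) ∨ w2 = v + (3, 3) := by
        simp only [kingN, Set.mem_setOf_eq, Prod.fst_add, Prod.snd_add, abs_le, Prod.ext_iff] at hy2 hx2 ⊢
        omega
      obtain ⟨w3, hw3C, hy3, hx3⟩ := forced hC (v + (2, 2)) (v + (2, 1)) (by simp [Prod.ext_iff])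
      have hd3 : w3 = v + (1, 0) ∨ w3 = v + (2, 0) ∨ w3 = v + (3, 0) := by
        simp only [kingN, Set.mem_setOf_eq, Prod.fst_add, Prod.snd_add, abs_le, Prod.ext_iff] at hy3 hx3 ⊢
        omega
      rcases hd1 with rfl | rfl | rfl <;> rcases hd2 with rfl | rfl | rfl <;>
        rcases hd3 with rfl | rfl | rfl <;>
        exact six_le C v _ _ _ _ _ _ hA hB hc hw1C hw2C hw3C (by decide) (by decide)
end

section
/- Let C be a (1,≤2)-identifying code of the king grid. If a frame F contains exactly two corner elements of C and these lie on opposite corners (i.e., they are the corners v+(0,0) and v+(3,3), or the corners v+(3,0) and v+(0,3), of the frame at v), then F contains at least six elements of C (i.e., F is a 6^+-frame). -/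
open Filter

section OppositeCornerHelpers

lemma mem_kingN_iff (c w : ℤ × ℤ) :
    c ∈ kingN w ↔ (w.1 - 1 ≤ c.1 ∧ c.1 ≤ w.1 + 1 ∧ w.2 - 1 ≤ c.2 ∧ c.2 ≤ w.2 + 1) := by
  simp only [kingN, Set.mem_setOf_eq, abs_le]
  omega

lemma mem_frame_of (v c : ℤ × ℤ)
    (h5 : c.1 = v.1 ∨ c.1 = v.1 + 3 ∨ c.2 = v.2 ∨ c.2 = v.2 + 3)
    (h1 : v.1 ≤ c.1) (h2 : c.1 ≤ v.1 + 3) (h3 : v.2 ≤ c.2) (h4 : c.2 ≤ v.2 + 3) :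
    c ∈ frame v := by
  simp only [frame, Finset.mem_image, Finset.mem_filter, Finset.mem_product, Finset.mem_Icc]
  refine ⟨(c.1 - v.1, c.2 - v.2), ⟨⟨⟨by omega, by omega⟩, by omega, by omega⟩, by omega⟩, ?_⟩
  simp [Prod.ext_iff]

lemma sep (C : Set (ℤ × ℤ)) (hC : IsIdCode 2 C) (u w : ℤ × ℤ) (hne : u ≠ w) :
    ∃ c ∈ C, c ∈ kingN w ∧ c ∉ kingN u := by
  have h := hC {u} {u, w} (Set.finite_singleton u) (Set.Finite.insert u (Set.finite_singleton w))
    (by simp) (le_trans (Set.ncard_insert_le u {w}) (by simp))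
    (by
      intro heq
      have : w ∈ ({u} : Set (ℤ × ℤ)) := heq ▸ (by simp : w ∈ ({u, w} : Set (ℤ × ℤ)))
      exact hne (by simpa using this.symm))
  have h1 : kingNS {u} = kingN u := by simp [kingNS]
  have h2 : kingNS {u, w} = kingN u ∪ kingN w := by simp [kingNS]
  rw [h1, h2] at h
  have hss : kingN u ∩ C ⊂ (kingN u ∪ kingN w) ∩ C :=
    ssubset_of_subset_of_ne (Set.inter_subset_inter_left C Set.subset_union_left) h
  obtain ⟨c, hc1, hc2⟩ := Set.exists_of_ssubset hss
  exact ⟨c, hc1.2, by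
    rcases hc1.1 with h | h
    · exact absurd ⟨h, hc1.2⟩ hc2
    · exact h, fun hcu => hc2 ⟨hcu, hc1.2⟩⟩

lemma corner_not_mem (C : Set (ℤ × ℤ)) (v : ℤ × ℤ)
    (h2 : (C ∩ (corners v : Set (ℤ × ℤ))).ncard = 2) (p q r : ℤ × ℤ)
    (hp : p ∈ C) (hq : q ∈ C) (hpc : p ∈ corners v) (hqc : q ∈ corners v) (hrc : r ∈ corners v)
    (hpq : p ≠ q) (hpr : p ≠ r) (hqr : q ≠ r) : r ∉ C := by
  intro hr
  have hsub : (↑({p, q, r} : Finset (ℤ × ℤ)) : Set (ℤ × ℤ)) ⊆ C ∩ ↑(corners v) := by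
    intro x hx
    simp only [Finset.coe_insert, Set.mem_insert_iff, Finset.coe_singleton,
      Set.mem_singleton_iff] at hx
    rcases hx with rfl | rfl | rfl
    · exact ⟨hp, hpc⟩
    · exact ⟨hq, hqc⟩
    · exact ⟨hr, hrc⟩
  have h3 : ({p, q, r} : Finset (ℤ × ℤ)).card = 3 := by
    rw [Finset.card_insert_of_notMem (by simp [hpq, hpr]),
      Finset.card_insert_of_notMem (by simp [hqr]), Finset.card_singleton]
  have := Set.ncard_le_ncard hsub (Set.Finite.inter_of_right (corners v).finite_toSet C)
  rw [Set.ncard_coe_finset, h3, h2] at this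
  omega

lemma final_count (C : Set (ℤ × ℤ)) (v p1 p2 ct cb cl cr : ℤ × ℤ)
    (hp1 : p1 ∈ C) (hp2 : p2 ∈ C) (hct : ct ∈ C) (hcb : cb ∈ C) (hcl : cl ∈ C) (hcr : cr ∈ C)
    (hp : (p1 = v + ((0:ℤ), (0:ℤ)) ∧ p2 = v + ((3:ℤ), (3:ℤ))) ∨
      (p1 = v + ((3:ℤ), (0:ℤ)) ∧ p2 = v + ((0:ℤ), (3:ℤ))))
    (ht : ct.2 = v.2 + 3 ∧ (ct.1 = v.1 + 1 ∨ ct.1 = v.1 + 2))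
    (hb : cb.2 = v.2 ∧ (cb.1 = v.1 + 1 ∨ cb.1 = v.1 + 2))
    (hl : cl.1 = v.1 ∧ (cl.2 = v.2 + 1 ∨ cl.2 = v.2 + 2))
    (hr : cr.1 = v.1 + 3 ∧ (cr.2 = v.2 + 1 ∨ cr.2 = v.2 + 2)) :
    6 ≤ frameCount C v := by
  have hp1' : (p1.1 = v.1 ∧ p1.2 = v.2) ∨ (p1.1 = v.1 + 3 ∧ p1.2 = v.2) := by
    rcases hp with ⟨h, _⟩ | ⟨h, _⟩ <;> subst h <;> simp
  have hp2' : (p2.1 = v.1 + 3 ∧ p2.2 = v.2 + 3) ∨ (p2.1 = v.1 ∧ p2.2 = v.2 + 3) := by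
    rcases hp with ⟨_, h⟩ | ⟨_, h⟩ <;> subst h <;> simp
  have hmemf : ∀ x ∈ ({p1, p2, ct, cb, cl, cr} : Finset (ℤ × ℤ)), x ∈ C ∩ (frame v : Set (ℤ × ℤ)) := by
    intro x hx
    simp only [Finset.mem_insert, Finset.mem_singleton] at hx
    rcases hx with rfl | rfl | rfl | rfl | rfl | rfl
    · exact ⟨hp1, mem_frame_of v x (by omega) (by omega) (by omega) (by omega) (by omega)⟩
    · exact ⟨hp2, mem_frame_of v x (by omega) (by omega) (by omega) (by omega) (by omega)⟩
    · exact ⟨hct, mem_frame_of v x (by omega) (by omega) (by omega) (by omega) (by omega)⟩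
    · exact ⟨hcb, mem_frame_of v x (by omega) (by omega) (by omega) (by omega) (by omega)⟩
    · exact ⟨hcl, mem_frame_of v x (by omega) (by omega) (by omega) (by omega) (by omega)⟩
    · exact ⟨hcr, mem_frame_of v x (by omega) (by omega) (by omega) (by omega) (by omega)⟩
  have hcard : ({p1, p2, ct, cb, cl, cr} : Finset (ℤ × ℤ)).card = 6 := by
    rw [Finset.card_insert_of_notMem (by
        simp only [Finset.mem_insert, Finset.mem_singleton, Prod.ext_iff]; omega),
      Finset.card_insert_of_notMem (by
        simp only [Finset.mem_insert, Finset.mem_singleton, Prod.ext_iff]; omega),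
      Finset.card_insert_of_notMem (by
        simp only [Finset.mem_insert, Finset.mem_singleton, Prod.ext_iff]; omega),
      Finset.card_insert_of_notMem (by
        simp only [Finset.mem_insert, Finset.mem_singleton, Prod.ext_iff]; omega),
      Finset.card_insert_of_notMem (by simp only [Finset.mem_singleton, Prod.ext_iff]; omega),
      Finset.card_singleton]
  have hfin : (C ∩ (frame v : Set (ℤ × ℤ))).Finite :=
    Set.Finite.inter_of_right (frame v).finite_toSet C
  have := Set.ncard_le_ncard (fun x hx => hmemf x (Finset.mem_coe.mp hx)) hfin
  rw [Set.ncard_coe_finset, hcard] at this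
  exact this

end OppositeCornerHelpers

/-- If a frame contains exactly two corner codewords which lie on opposite corners, then
it is a `6⁺`-frame. -/
theorem opposite_corner_codewords (C : Set (ℤ × ℤ)) (hC : IsIdCode 2 C) (v : ℤ × ℤ)
    (h2 : (C ∩ (corners v : Set (ℤ × ℤ))).ncard = 2)
    (hopp : (v + ((0 : ℤ), (0 : ℤ)) ∈ C ∧ v + ((3 : ℤ), (3 : ℤ)) ∈ C) ∨
      (v + ((3 : ℤ), (0 : ℤ)) ∈ C ∧ v + ((0 : ℤ), (3 : ℤ)) ∈ C)) :
    6 ≤ frameCount C v := by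

  have hcor : ∀ a b : ℤ, (a = 0 ∨ a = 3) → (b = 0 ∨ b = 3) → v + (a, b) ∈ corners v := by
    intro a b ha hb
    rcases ha with rfl | rfl <;> rcases hb with rfl | rfl <;> simp [corners]
  rcases hopp with ⟨hc1, hc2⟩ | ⟨hc1, hc2⟩
  · -- corners (0,0) and (3,3) in C
    have h30 : v + ((3 : ℤ), (0 : ℤ)) ∉ C :=
      corner_not_mem C v h2 _ _ _ hc1 hc2 (hcor 0 0 (by norm_num) (by norm_num))
        (hcor 3 3 (by norm_num) (by norm_num)) (hcor 3 0 (by norm_num) (by norm_num))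
        (by simp [Prod.ext_iff]) (by simp [Prod.ext_iff]) (by simp [Prod.ext_iff])
    have h03 : v + ((0 : ℤ), (3 : ℤ)) ∉ C :=
      corner_not_mem C v h2 _ _ _ hc1 hc2 (hcor 0 0 (by norm_num) (by norm_num))
        (hcor 3 3 (by norm_num) (by norm_num)) (hcor 0 3 (by norm_num) (by norm_num))
        (by simp [Prod.ext_iff]) (by simp [Prod.ext_iff]) (by simp [Prod.ext_iff])
    -- top side
    obtain ⟨ct, htC, htw, htu⟩ := sep C hC (v + ((1:ℤ),(1:ℤ))) (v + ((1:ℤ),(2:ℤ)))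
      (by simp [Prod.ext_iff])
    rw [mem_kingN_iff] at htw htu
    simp only [Prod.fst_add, Prod.snd_add] at htw htu
    have hten : ct ≠ v + ((0:ℤ),(3:ℤ)) := fun h => h03 (h ▸ htC)
    rw [Ne, Prod.ext_iff] at hten
    simp only [Prod.fst_add, Prod.snd_add] at hten
    -- bottom side
    obtain ⟨cb, hbC, hbw, hbu⟩ := sep C hC (v + ((2:ℤ),(2:ℤ))) (v + ((2:ℤ),(1:ℤ)))
      (by simp [Prod.ext_iff])
    rw [mem_kingN_iff] at hbw hbu
    simp only [Prod.fst_add, Prod.snd_add] at hbw hbu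
    have hben : cb ≠ v + ((3:ℤ),(0:ℤ)) := fun h => h30 (h ▸ hbC)
    rw [Ne, Prod.ext_iff] at hben
    simp only [Prod.fst_add, Prod.snd_add] at hben
    -- left side
    obtain ⟨cl, hlC, hlw, hlu⟩ := sep C hC (v + ((2:ℤ),(2:ℤ))) (v + ((1:ℤ),(2:ℤ)))
      (by simp [Prod.ext_iff])
    rw [mem_kingN_iff] at hlw hlu
    simp only [Prod.fst_add, Prod.snd_add] at hlw hlu
    have hlen : cl ≠ v + ((0:ℤ),(3:ℤ)) := fun h => h03 (h ▸ hlC)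
    rw [Ne, Prod.ext_iff] at hlen
    simp only [Prod.fst_add, Prod.snd_add] at hlen
    -- right side
    obtain ⟨cr, hrC, hrw, hru⟩ := sep C hC (v + ((1:ℤ),(1:ℤ))) (v + ((2:ℤ),(1:ℤ)))
      (by simp [Prod.ext_iff])
    rw [mem_kingN_iff] at hrw hru
    simp only [Prod.fst_add, Prod.snd_add] at hrw hru
    have hren : cr ≠ v + ((3:ℤ),(0:ℤ)) := fun h => h30 (h ▸ hrC)
    rw [Ne, Prod.ext_iff] at hren
    simp only [Prod.fst_add, Prod.snd_add] at hren
    exact final_count C v _ _ ct cb cl cr hc1 hc2 htC hbC hlC hrC (Or.inl ⟨rfl, rfl⟩)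
      ⟨by omega, by omega⟩ ⟨by omega, by omega⟩ ⟨by omega, by omega⟩ ⟨by omega, by omega⟩
  · -- corners (3,0) and (0,3) in C
    have h00 : v + ((0 : ℤ), (0 : ℤ)) ∉ C :=
      corner_not_mem C v h2 _ _ _ hc1 hc2 (hcor 3 0 (by norm_num) (by norm_num))
        (hcor 0 3 (by norm_num) (by norm_num)) (hcor 0 0 (by norm_num) (by norm_num))
        (by simp [Prod.ext_iff]) (by simp [Prod.ext_iff]) (by simp [Prod.ext_iff])
    have h33 : v + ((3 : ℤ), (3 : ℤ)) ∉ C :=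
      corner_not_mem C v h2 _ _ _ hc1 hc2 (hcor 3 0 (by norm_num) (by norm_num))
        (hcor 0 3 (by norm_num) (by norm_num)) (hcor 3 3 (by norm_num) (by norm_num))
        (by simp [Prod.ext_iff]) (by simp [Prod.ext_iff]) (by simp [Prod.ext_iff])
    -- top side
    obtain ⟨ct, htC, htw, htu⟩ := sep C hC (v + ((2:ℤ),(1:ℤ))) (v + ((2:ℤ),(2:ℤ)))
      (by simp [Prod.ext_iff])
    rw [mem_kingN_iff] at htw htu
    simp only [Prod.fst_add, Prod.snd_add] at htw htu
    have hten : ct ≠ v + ((3:ℤ),(3:ℤ)) := fun h => h33 (h ▸ htC)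
    rw [Ne, Prod.ext_iff] at hten
    simp only [Prod.fst_add, Prod.snd_add] at hten
    -- bottom side
    obtain ⟨cb, hbC, hbw, hbu⟩ := sep C hC (v + ((1:ℤ),(2:ℤ))) (v + ((1:ℤ),(1:ℤ)))
      (by simp [Prod.ext_iff])
    rw [mem_kingN_iff] at hbw hbu
    simp only [Prod.fst_add, Prod.snd_add] at hbw hbu
    have hben : cb ≠ v + ((0:ℤ),(0:ℤ)) := fun h => h00 (h ▸ hbC)
    rw [Ne, Prod.ext_iff] at hben
    simp only [Prod.fst_add, Prod.snd_add] at hben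
    -- left side
    obtain ⟨cl, hlC, hlw, hlu⟩ := sep C hC (v + ((2:ℤ),(1:ℤ))) (v + ((1:ℤ),(1:ℤ)))
      (by simp [Prod.ext_iff])
    rw [mem_kingN_iff] at hlw hlu
    simp only [Prod.fst_add, Prod.snd_add] at hlw hlu
    have hlen : cl ≠ v + ((0:ℤ),(0:ℤ)) := fun h => h00 (h ▸ hlC)
    rw [Ne, Prod.ext_iff] at hlen
    simp only [Prod.fst_add, Prod.snd_add] at hlen
    -- right side
    obtain ⟨cr, hrC, hrw, hru⟩ := sep C hC (v + ((1:ℤ),(2:ℤ))) (v + ((2:ℤ),(2:ℤ)))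
      (by simp [Prod.ext_iff])
    rw [mem_kingN_iff] at hrw hru
    simp only [Prod.fst_add, Prod.snd_add] at hrw hru
    have hren : cr ≠ v + ((3:ℤ),(3:ℤ)) := fun h => h33 (h ▸ hrC)
    rw [Ne, Prod.ext_iff] at hren
    simp only [Prod.fst_add, Prod.snd_add] at hren
    exact final_count C v _ _ ct cb cl cr hc1 hc2 htC hbC hlC hrC (Or.inr ⟨rfl, rfl⟩)
      ⟨by omega, by omega⟩ ⟨by omega, by omega⟩ ⟨by omega, by omega⟩ ⟨by omega, by omega⟩
end
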